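/- arXiv:1305.0203 — 4 statements merged into one kernel-verified Lean document; each statement's English description precedes it below -/
import Mathlib

section
/- Let M ∈ ℝ^{m×n} be partitioned in blocks with top-left s×s block A_M, let G ∈ ℝ^{m×s}, S ∈ ℝ^{s×n} satisfy ‖M − GS‖₂ ≤ e_s, let G_A be the top s rows of G and S_A the first s columns of S. Assume: (1) σ_s(GS) > 0; (2) there is γ ≥ 1 with σ_s(G)·σ_s(S) = σ_s(GS)/γ; (3) there is β ≥ 1 with σ_s(G_A) ≥ σ_s(G)/β and σ_s(S_A) ≥ σ_s(S)/β; (4) e_s < (σ_s(M) − e_s)/(β²γ). Then A_M is nonsingular. -/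
open Matrix

/-- Port helper: `Matrix.isHermitian_transpose_mul_self` is no longer in Mathlib. -/
theorem Matrix.isHermitian_transpose_mul_self {m n : Type*} [Fintype m]
    (A : Matrix m n ℝ) : (Aᵀ * A).IsHermitian := by
  simpa [Matrix.conjTranspose_eq_transpose_of_trivial] using
    Matrix.isHermitian_conjTranspose_mul_self A

/-- `sv A k` is the `k`-th largest singular value (1-indexed) of the real matrix `A`,
computed as the `k`-th largest square root of an eigenvalue of `Aᵀ * A`. -/
noncomputable def sv {p q : ℕ} (A : Matrix (Fin p) (Fin q) ℝ) (k : ℕ) : ℝ :=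
  if h : q - k < q then
    (fun i : Fin q => Real.sqrt ((Matrix.isHermitian_transpose_mul_self A).eigenvalues i))
      (Tuple.sort (fun i : Fin q =>
        Real.sqrt ((Matrix.isHermitian_transpose_mul_self A).eigenvalues i)) ⟨q - k, h⟩)
  else 0

section Helpers

open RealInnerProductSpace Finset

variable {p q : ℕ}

/-- `A *ᵥ x` as a map between Euclidean spaces. -/
noncomputable def mvE (A : Matrix (Fin p) (Fin q) ℝ) (x : EuclideanSpace ℝ (Fin q)) :
    EuclideanSpace ℝ (Fin p) :=
  (WithLp.equiv 2 (Fin p → ℝ)).symm (A *ᵥ (WithLp.equiv 2 (Fin q → ℝ) x))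

lemma mvE_apply (A : Matrix (Fin p) (Fin q) ℝ) (x : EuclideanSpace ℝ (Fin q)) (i : Fin p) :
    mvE A x i = A.mulVec (fun j => x j) i := rfl

lemma sv_nonneg (A : Matrix (Fin p) (Fin q) ℝ) (k : ℕ) : 0 ≤ sv A k := by
  unfold sv
  split
  · exact Real.sqrt_nonneg _
  · exact le_refl 0

lemma inner_eq_dot (x y : EuclideanSpace ℝ (Fin q)) :
    ⟪x, y⟫ = (fun i => x i) ⬝ᵥ (fun i => y i) := by
  simp [PiLp.inner_apply, dotProduct, mul_comm]

lemma enorm_sq (y : EuclideanSpace ℝ (Fin q)) : ‖y‖ ^ 2 = ∑ i, (y i) ^ 2 := by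
  rw [EuclideanSpace.norm_eq, Real.sq_sqrt (by positivity)]
  simp [sq_abs]

lemma norm_sq_eq_sum_repr (w : OrthonormalBasis (Fin q) ℝ (EuclideanSpace ℝ (Fin q)))
    (x : EuclideanSpace ℝ (Fin q)) : ‖x‖ ^ 2 = ∑ j, (w.repr x j) ^ 2 := by
  rw [← w.repr.norm_map x, enorm_sq]

lemma master (A : Matrix (Fin p) (Fin q) ℝ) :
    ∃ (w : OrthonormalBasis (Fin q) ℝ (EuclideanSpace ℝ (Fin q))) (μ : Fin q → ℝ),
      Monotone μ ∧ (∀ j, 0 ≤ μ j) ∧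
      (∀ (k : ℕ) (h : q - k < q), sv A k = Real.sqrt (μ ⟨q - k, h⟩)) ∧
      ∀ x : EuclideanSpace ℝ (Fin q),
        ‖mvE A x‖ ^ 2 = ∑ j, μ j * (w.repr x j) ^ 2 := by
  have hH := Matrix.isHermitian_transpose_mul_self A
  have hnn : ∀ i, 0 ≤ hH.eigenvalues i := fun i =>
    Matrix.eigenvalues_conjTranspose_mul_self_nonneg A i
  set f : Fin q → ℝ := fun i => Real.sqrt (hH.eigenvalues i) with hf
  set σ : Equiv.Perm (Fin q) := Tuple.sort f with hσ
  have hmono : Monotone (f ∘ σ) := Tuple.monotone_sort f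
  set w : OrthonormalBasis (Fin q) ℝ (EuclideanSpace ℝ (Fin q)) :=
    hH.eigenvectorBasis.reindex σ.symm with hw
  refine ⟨w, fun j => hH.eigenvalues (σ j), ?_, fun j => hnn _, ?_, ?_⟩
  · intro i j hij
    have h1 : f (σ i) ≤ f (σ j) := hmono hij
    have h2 : 0 ≤ f (σ i) := Real.sqrt_nonneg _
    have e1 : f (σ i) ^ 2 = hH.eigenvalues (σ i) := Real.sq_sqrt (hnn _)
    have e2 : f (σ j) ^ 2 = hH.eigenvalues (σ j) := Real.sq_sqrt (hnn _)
    show hH.eigenvalues (σ i) ≤ hH.eigenvalues (σ j)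
    nlinarith
  · intro k h
    simp only [sv, dif_pos h]
    rfl
  · intro x
    set H : Matrix (Fin q) (Fin q) ℝ := Aᴴ * A with hHdef
    have hAT : Aᴴ = Aᵀ := Matrix.conjTranspose_eq_transpose_of_trivial A
    have hwj : ∀ j : Fin q, H *ᵥ (fun i => w j i) = hH.eigenvalues (σ j) • (fun i => w j i) := by
      intro j
      have h0 := hH.mulVec_eigenvectorBasis (σ j)
      have h2 : w j = hH.eigenvectorBasis (σ j) := by
        rw [hw, OrthonormalBasis.reindex_apply, Equiv.symm_symm]
      rw [h2]
      exact h0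
    have hsymm : Hᵀ = H := by
      rw [hHdef, hAT, Matrix.transpose_mul, Matrix.transpose_transpose]
    have key1 : ‖mvE A x‖ ^ 2 = ⟪x, mvE H x⟫ := by
      rw [← real_inner_self_eq_norm_sq, inner_eq_dot, inner_eq_dot]
      show (A *ᵥ fun j => x j) ⬝ᵥ (A *ᵥ fun j => x j)
          = (fun i => x i) ⬝ᵥ ((Aᴴ * A) *ᵥ (fun i => x i))
      rw [hAT, ← Matrix.mulVec_mulVec, Matrix.dotProduct_mulVec (fun i => x i) Aᵀ,
        Matrix.vecMul_transpose]
    have key2 : ∀ j, w.repr (mvE H x) j = hH.eigenvalues (σ j) * w.repr x j := by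
      intro j
      rw [OrthonormalBasis.repr_apply_apply, OrthonormalBasis.repr_apply_apply,
        inner_eq_dot, inner_eq_dot]
      show (fun i => w j i) ⬝ᵥ (H *ᵥ fun i => x i) = _
      rw [Matrix.dotProduct_mulVec]
      rw [show (fun i => w j i) ᵥ* H = H *ᵥ (fun i => w j i) by
        conv_lhs => rw [← hsymm]
        rw [Matrix.vecMul_transpose]]
      rw [hwj j]
      simp [smul_dotProduct]
    rw [key1]
    rw [show ⟪x, mvE H x⟫ = ⟪w.repr x, w.repr (mvE H x)⟫ from (w.repr.inner_map_map x _).symm]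
    rw [PiLp.inner_apply]
    simp only [RCLike.inner_apply, starRingEnd_apply, star_trivial, key2]
    apply Finset.sum_congr rfl
    intro j _
    ring

end Helpers

section Helpers2

open RealInnerProductSpace Finset

variable {p q : ℕ}

lemma repr_zero_of_span (w : OrthonormalBasis (Fin q) ℝ (EuclideanSpace ℝ (Fin q)))
    (T : Finset (Fin q)) {x : EuclideanSpace ℝ (Fin q)}
    (hx : x ∈ Submodule.span ℝ (⇑w '' ↑T)) {j : Fin q} (hj : j ∉ T) :
    w.repr x j = 0 := by
  induction hx using Submodule.span_induction with
  | mem y hy =>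
    obtain ⟨i, hi, rfl⟩ := hy
    rw [OrthonormalBasis.repr_self]
    have hne : j ≠ i := fun h => hj (h ▸ hi)
    simp [EuclideanSpace.single_apply, hne]
  | zero => simp
  | add y z hy hz ihy ihz => simp [map_add, ihy, ihz]
  | smul a y hy ih => simp [_root_.map_smul, ih]

lemma finrank_span_w (w : OrthonormalBasis (Fin q) ℝ (EuclideanSpace ℝ (Fin q)))
    (T : Finset (Fin q)) :
    Module.finrank ℝ (Submodule.span ℝ (⇑w '' ↑T)) = T.card := by
  have li : LinearIndependent ℝ (fun t : {x // x ∈ T} => w t.val) :=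
    (w.orthonormal.linearIndependent).comp _ Subtype.val_injective
  have h1 := finrank_span_eq_card li
  rw [show Set.range (fun t : {x // x ∈ T} => w t.val) = ⇑w '' ↑T by
    ext y
    constructor
    · rintro ⟨t, rfl⟩
      exact ⟨t.1, t.2, rfl⟩
    · rintro ⟨i, hi, rfl⟩
      exact ⟨⟨i, hi⟩, rfl⟩] at h1
  rw [h1, Fintype.card_coe]

lemma quad_ge_on_span (A : Matrix (Fin p) (Fin q) ℝ)
    (w : OrthonormalBasis (Fin q) ℝ (EuclideanSpace ℝ (Fin q))) (μ : Fin q → ℝ)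
    (hQ : ∀ x, ‖mvE A x‖ ^ 2 = ∑ j, μ j * (w.repr x j) ^ 2)
    (T : Finset (Fin q)) (c : ℝ) (hc : ∀ j ∈ T, c ≤ μ j) :
    ∀ x ∈ Submodule.span ℝ (⇑w '' ↑T), c * ‖x‖ ^ 2 ≤ ‖mvE A x‖ ^ 2 := by
  intro x hx
  rw [hQ, norm_sq_eq_sum_repr w x, Finset.mul_sum]
  apply Finset.sum_le_sum
  intro j _
  by_cases hj : j ∈ T
  · nlinarith [hc j hj, sq_nonneg (w.repr x j)]
  · rw [repr_zero_of_span w T hx hj]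
    simp

lemma quad_le_on_span (A : Matrix (Fin p) (Fin q) ℝ)
    (w : OrthonormalBasis (Fin q) ℝ (EuclideanSpace ℝ (Fin q))) (μ : Fin q → ℝ)
    (hQ : ∀ x, ‖mvE A x‖ ^ 2 = ∑ j, μ j * (w.repr x j) ^ 2)
    (T : Finset (Fin q)) (c : ℝ) (hc : ∀ j ∈ T, μ j ≤ c) :
    ∀ x ∈ Submodule.span ℝ (⇑w '' ↑T), ‖mvE A x‖ ^ 2 ≤ c * ‖x‖ ^ 2 := by
  intro x hx
  rw [hQ, norm_sq_eq_sum_repr w x, Finset.mul_sum]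
  apply Finset.sum_le_sum
  intro j _
  by_cases hj : j ∈ T
  · nlinarith [hc j hj, sq_nonneg (w.repr x j)]
  · rw [repr_zero_of_span w T hx hj]
    simp

lemma sv_one_bound (A : Matrix (Fin p) (Fin q) ℝ) (h0 : 0 < q)
    (x : EuclideanSpace ℝ (Fin q)) : ‖mvE A x‖ ≤ sv A 1 * ‖x‖ := by
  obtain ⟨w, μ, mono, nn, hsv, hQ⟩ := master A
  have ht : q - 1 < q := by omega
  have hb : ‖mvE A x‖ ^ 2 ≤ (sv A 1 * ‖x‖) ^ 2 := by
    rw [hQ, hsv 1 ht, mul_pow, Real.sq_sqrt (nn _), norm_sq_eq_sum_repr w x, Finset.mul_sum]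
    apply Finset.sum_le_sum
    intro j _
    have hj : j ≤ (⟨q - 1, ht⟩ : Fin q) := by
      rw [Fin.le_def]
      have := j.isLt
      simp only [Fin.val_mk]
      omega
    nlinarith [mono hj, sq_nonneg (w.repr x j), nn j]
  nlinarith [norm_nonneg (mvE A x), mul_nonneg (sv_nonneg A 1) (norm_nonneg x)]

lemma sv_min_bound (A : Matrix (Fin p) (Fin q) ℝ) (h0 : 0 < q)
    (x : EuclideanSpace ℝ (Fin q)) : sv A q * ‖x‖ ≤ ‖mvE A x‖ := by
  obtain ⟨w, μ, mono, nn, hsv, hQ⟩ := master A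
  have ht : q - q < q := by omega
  have hb : (sv A q * ‖x‖) ^ 2 ≤ ‖mvE A x‖ ^ 2 := by
    rw [hQ, hsv q ht, mul_pow, Real.sq_sqrt (nn _), norm_sq_eq_sum_repr w x, Finset.mul_sum]
    apply Finset.sum_le_sum
    intro j _
    have hj : (⟨q - q, ht⟩ : Fin q) ≤ j := by
      rw [Fin.le_def]
      simp only [Fin.val_mk]
      omega
    nlinarith [mono hj, sq_nonneg (w.repr x j), nn (⟨q - q, ht⟩ : Fin q)]
  nlinarith [norm_nonneg (mvE A x), mul_nonneg (sv_nonneg A q) (norm_nonneg x)]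

lemma weyl (A B : Matrix (Fin p) (Fin q) ℝ) (k : ℕ) (hk1 : 1 ≤ k) (hkq : k ≤ q) :
    sv A k ≤ sv B k + sv (A - B) 1 := by
  have h0 : 0 < q := lt_of_lt_of_le hk1 hkq
  have ht : q - k < q := by omega
  set t : Fin q := ⟨q - k, ht⟩ with htdef
  obtain ⟨wA, μA, monoA, nnA, svA, qA⟩ := master A
  obtain ⟨wB, μB, monoB, nnB, svB, qB⟩ := master B
  set V := Submodule.span ℝ (⇑wA '' ↑(Finset.Ici t)) with hVdef
  set W := Submodule.span ℝ (⇑wB '' ↑(Finset.Iic t)) with hWdef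
  have hV : Module.finrank ℝ V = k := by
    rw [hVdef, finrank_span_w, Fin.card_Ici, htdef]
    simp only [Fin.val_mk]
    omega
  have hW : Module.finrank ℝ W = q - k + 1 := by
    rw [hWdef, finrank_span_w, Fin.card_Iic, htdef]
  have hdim : 0 < Module.finrank ℝ ↥(V ⊓ W) := by
    have hsum := Submodule.finrank_sup_add_finrank_inf_eq V W
    have hle : Module.finrank ℝ ↥(V ⊔ W) ≤ q := by
      have h2 := Submodule.finrank_le (V ⊔ W)
      simpa [finrank_euclideanSpace_fin] using h2
    omega
  obtain ⟨⟨x, hxVW⟩, hxne⟩ := Module.finrank_pos_iff_exists_ne_zero.mp hdim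
  have hxV : x ∈ V := hxVW.1
  have hxW : x ∈ W := hxVW.2
  have hx0 : x ≠ 0 := fun h => hxne (Subtype.ext h)
  have hxpos : (0 : ℝ) < ‖x‖ := norm_pos_iff.mpr hx0
  have hA2 : μA t * ‖x‖ ^ 2 ≤ ‖mvE A x‖ ^ 2 :=
    quad_ge_on_span A wA μA qA (Finset.Ici t) (μA t)
      (fun j hj => monoA (Finset.mem_Ici.mp hj)) x hxV
  have hA1 : sv A k * ‖x‖ ≤ ‖mvE A x‖ := by
    rw [svA k ht]
    have h1 : (Real.sqrt (μA t) * ‖x‖) ^ 2 = μA t * ‖x‖ ^ 2 := by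
      rw [mul_pow, Real.sq_sqrt (nnA t)]
    nlinarith [norm_nonneg (mvE A x),
      mul_nonneg (Real.sqrt_nonneg (μA t)) (norm_nonneg x)]
  have hB2 : ‖mvE B x‖ ^ 2 ≤ μB t * ‖x‖ ^ 2 :=
    quad_le_on_span B wB μB qB (Finset.Iic t) (μB t)
      (fun j hj => monoB (Finset.mem_Iic.mp hj)) x hxW
  have hB1 : ‖mvE B x‖ ≤ sv B k * ‖x‖ := by
    rw [svB k ht]
    have h1 : (Real.sqrt (μB t) * ‖x‖) ^ 2 = μB t * ‖x‖ ^ 2 := by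
      rw [mul_pow, Real.sq_sqrt (nnB t)]
    nlinarith [norm_nonneg (mvE B x),
      mul_nonneg (Real.sqrt_nonneg (μB t)) (norm_nonneg x)]
  have hE1 : ‖mvE (A - B) x‖ ≤ sv (A - B) 1 * ‖x‖ := sv_one_bound _ h0 x
  have hsplit : mvE A x = mvE B x + mvE (A - B) x := by
    ext i
    show mvE A x i = mvE B x i + mvE (A - B) x i
    simp [mvE_apply, Matrix.sub_mulVec]
  have tineq : ‖mvE A x‖ ≤ ‖mvE B x‖ + ‖mvE (A - B) x‖ := by
    rw [hsplit]; exact norm_add_le _ _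
  have hfin : sv A k * ‖x‖ ≤ (sv B k + sv (A - B) 1) * ‖x‖ := by
    rw [add_mul]; linarith
  exact le_of_mul_le_mul_right hfin hxpos

end Helpers2

/-- Theorem `a_is_invertible`: under assumptions (1)–(4) on the
approximate rank-`s` decomposition `M ≈ G * S`, the sample matrix `A_M`
(the top-left `s×s` block of `M`) is nonsingular. -/
theorem stmt2 (m n s : ℕ) (hs : 1 ≤ s)
    (M : Matrix (Fin (s + m)) (Fin (s + n)) ℝ)
    (G : Matrix (Fin (s + m)) (Fin s) ℝ) (S : Matrix (Fin s) (Fin (s + n)) ℝ)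
    (es : ℝ) (hes : sv (M - G * S) 1 ≤ es)
    (GA : Matrix (Fin s) (Fin s) ℝ) (hGAdef : GA = G.submatrix (Fin.castAdd m) id)
    (SA : Matrix (Fin s) (Fin s) ℝ) (hSAdef : SA = S.submatrix id (Fin.castAdd n))
    (AM : Matrix (Fin s) (Fin s) ℝ)
    (hAMdef : AM = M.submatrix (Fin.castAdd m) (Fin.castAdd n))
    (h1 : 0 < sv (G * S) s)
    (γ : ℝ) (hγ : 1 ≤ γ) (h2 : sv G s * sv S s = sv (G * S) s / γ)
    (β : ℝ) (hβ : 1 ≤ β) (h3G : sv G s / β ≤ sv GA s) (h3S : sv S s / β ≤ sv SA s)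
    (h4 : es < (sv M s - es) / (β ^ 2 * γ)) :
    IsUnit AM.det := by
  -- scalar part
  have es0 : 0 ≤ es := le_trans (sv_nonneg _ _) hes
  have βpos : (0:ℝ) < β := lt_of_lt_of_le one_pos hβ
  have γpos : (0:ℝ) < γ := lt_of_lt_of_le one_pos hγ
  have denpos : (0:ℝ) < β ^ 2 * γ := by positivity
  have hweyl : sv M s ≤ sv (G * S) s + sv (M - G * S) 1 :=
    weyl M (G * S) s hs (by omega)
  have key2 : sv M s - es ≤ sv (G * S) s := by linarith
  have g0 : 0 ≤ sv G s := sv_nonneg _ _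
  have s0 : 0 ≤ sv S s := sv_nonneg _ _
  have hab : sv G s * sv S s / β ^ 2 ≤ sv GA s * sv SA s := by
    have ha1 : 0 ≤ sv G s / β := by positivity
    have ha2 : 0 ≤ sv S s / β := by positivity
    calc sv G s * sv S s / β ^ 2 = (sv G s / β) * (sv S s / β) := by ring
    _ ≤ sv GA s * sv SA s := mul_le_mul h3G h3S ha2 (le_trans ha1 h3G)
  have hmain : es < sv GA s * sv SA s := by
    have e1 : sv G s * sv S s / β ^ 2 = sv (G * S) s / (β ^ 2 * γ) := by
      rw [h2, div_div, mul_comm]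
    have e2 : (sv M s - es) / (β ^ 2 * γ) ≤ sv (G * S) s / (β ^ 2 * γ) := by gcongr
    linarith
  -- matrix part
  set E : Matrix (Fin (s + m)) (Fin (s + n)) ℝ := M - G * S with hEdef
  set EA : Matrix (Fin s) (Fin s) ℝ := E.submatrix (Fin.castAdd m) (Fin.castAdd n) with hEAdef
  have hAMsum : AM = GA * SA + EA := by
    ext i j
    simp only [hAMdef, hGAdef, hSAdef, hEAdef, hEdef, Matrix.add_apply, Matrix.submatrix_apply,
      Matrix.mul_apply, Matrix.sub_apply, id]
    ring
  rw [isUnit_iff_ne_zero]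
  intro hdet
  obtain ⟨v, hv0, hv⟩ := (Matrix.exists_mulVec_eq_zero_iff).mpr hdet
  set xv : EuclideanSpace ℝ (Fin s) := (WithLp.equiv 2 (Fin s → ℝ)).symm v with hxvdef
  have hxv0 : xv ≠ 0 := by
    intro h
    apply hv0
    have h' := congrArg (WithLp.equiv 2 (Fin s → ℝ)) h
    simpa [hxvdef] using h'
  have hxvpos : (0:ℝ) < ‖xv‖ := norm_pos_iff.mpr hxv0
  have hmv : mvE AM xv = 0 := by
    simp [mvE, hxvdef, hv]
  -- lower bound for (GA * SA) on xv
  have hcomp : mvE (GA * SA) xv = mvE GA (mvE SA xv) := by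
    ext i
    show (GA * SA).mulVec (fun j => xv j) i = GA.mulVec (fun j => (mvE SA xv) j) i
    rw [show (fun j => (mvE SA xv) j) = SA.mulVec (fun j => xv j) from rfl,
      Matrix.mulVec_mulVec]
  have hGAlow : sv GA s * ‖mvE SA xv‖ ≤ ‖mvE GA (mvE SA xv)‖ :=
    sv_min_bound GA (by omega) _
  have hSAlow : sv SA s * ‖xv‖ ≤ ‖mvE SA xv‖ := sv_min_bound SA (by omega) _
  have hlow : sv GA s * (sv SA s * ‖xv‖) ≤ ‖mvE (GA * SA) xv‖ := by
    rw [hcomp]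
    calc sv GA s * (sv SA s * ‖xv‖) ≤ sv GA s * ‖mvE SA xv‖ :=
          mul_le_mul_of_nonneg_left hSAlow (sv_nonneg _ _)
    _ ≤ ‖mvE GA (mvE SA xv)‖ := hGAlow
  -- upper bound for EA on xv
  set xh : EuclideanSpace ℝ (Fin (s + n)) :=
    (WithLp.equiv 2 (Fin (s + n) → ℝ)).symm (Fin.append v 0) with hxhdef
  have hnormxh : ‖xh‖ = ‖xv‖ := by
    have hsq : ‖xh‖ ^ 2 = ‖xv‖ ^ 2 := by
      rw [enorm_sq, enorm_sq]
      simp only [hxhdef, hxvdef, WithLp.equiv_symm_apply, PiLp.toLp_apply]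
      rw [Fin.sum_univ_add]
      simp [Fin.append_left, Fin.append_right]
    rw [← Real.sqrt_sq (norm_nonneg xh), hsq, Real.sqrt_sq (norm_nonneg xv)]
  have hcomp2 : ∀ i : Fin s, (mvE E xh) (Fin.castAdd m i) = (mvE EA xv) i := by
    intro i
    show (E *ᵥ Fin.append v 0) (Fin.castAdd m i) = (EA *ᵥ v) i
    simp only [Matrix.mulVec, dotProduct, Fin.sum_univ_add, hEAdef,
      Matrix.submatrix_apply, Fin.append_left, Fin.append_right]
    simp
  have hsqle : ‖mvE EA xv‖ ^ 2 ≤ ‖mvE E xh‖ ^ 2 := by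
    rw [enorm_sq, enorm_sq, Fin.sum_univ_add]
    have hsum : ∑ i : Fin s, ((mvE EA xv) i) ^ 2
        = ∑ i : Fin s, ((mvE E xh) (Fin.castAdd m i)) ^ 2 :=
      Finset.sum_congr rfl (fun i _ => by rw [hcomp2])
    have hnn : 0 ≤ ∑ i : Fin m, ((mvE E xh) (Fin.natAdd s i)) ^ 2 :=
      Finset.sum_nonneg (fun i _ => sq_nonneg _)
    linarith
  have hEle : ‖mvE EA xv‖ ≤ ‖mvE E xh‖ := by
    nlinarith [norm_nonneg (mvE EA xv), norm_nonneg (mvE E xh)]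
  have hEbound : ‖mvE EA xv‖ ≤ es * ‖xv‖ := by
    have h5 : ‖mvE E xh‖ ≤ sv E 1 * ‖xh‖ := sv_one_bound E (by omega) xh
    have h6 : sv E 1 * ‖xv‖ ≤ es * ‖xv‖ :=
      mul_le_mul_of_nonneg_right hes (norm_nonneg _)
    rw [hnormxh] at h5
    linarith
  -- combine
  have hadd : mvE AM xv = mvE (GA * SA) xv + mvE EA xv := by
    ext i
    show AM.mulVec (fun j => xv j) i
        = (GA * SA).mulVec (fun j => xv j) i + EA.mulVec (fun j => xv j) i
    rw [hAMsum, Matrix.add_mulVec]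
    rfl
  have hneg : mvE (GA * SA) xv = - mvE EA xv := by
    have : mvE (GA * SA) xv + mvE EA xv = 0 := by rw [← hadd, hmv]
    exact eq_neg_of_add_eq_zero_left this
  have hnormeq : ‖mvE (GA * SA) xv‖ = ‖mvE EA xv‖ := by rw [hneg, norm_neg]
  have hcontr : sv GA s * (sv SA s * ‖xv‖) ≤ es * ‖xv‖ := by
    rw [hnormeq] at hlow
    linarith
  linarith [mul_lt_mul_of_pos_right hmain hxvpos]
end

section
/- Let M ∈ ℝ^{m×n} have rank at most s, be partitioned in blocks A_M, B_M, F_M, C_M with A_M ∈ ℝ^{s×s} its top-left block, and suppose A_M is nonsingular. Then C_M = F_M·A_M^{-1}·B_M; that is, the Nyström extension reconstructs M exactly: M = [A_M; F_M]·A_M^{-1}·[A_M, B_M]. -/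
open Matrix

/-- Corollary `rank_s_matrix_approx`: if `M` has rank at most `s`
and its top-left `s×s` block `A_M` is nonsingular, then
`C_M = F_M A_M⁻¹ B_M`, i.e. the Nyström extension
`[A_M; F_M] · A_M⁻¹ · [A_M, B_M]` reconstructs `M` exactly. -/
theorem stmt9 (m n s : ℕ)
    (M : Matrix (Fin (s + m)) (Fin (s + n)) ℝ)
    (hrank : M.rank ≤ s)
    (AM : Matrix (Fin s) (Fin s) ℝ)
    (hAMdef : AM = M.submatrix (Fin.castAdd m) (Fin.castAdd n))
    (BM : Matrix (Fin s) (Fin n) ℝ)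
    (hBMdef : BM = M.submatrix (Fin.castAdd m) (Fin.natAdd s))
    (FM : Matrix (Fin m) (Fin s) ℝ)
    (hFMdef : FM = M.submatrix (Fin.natAdd s) (Fin.castAdd n))
    (CM : Matrix (Fin m) (Fin n) ℝ)
    (hCMdef : CM = M.submatrix (Fin.natAdd s) (Fin.natAdd s))
    (hAM : IsUnit AM.det) :
    CM = FM * AM⁻¹ * BM ∧
      M.submatrix finSumFinEquiv finSumFinEquiv =
        Matrix.fromRows AM FM * AM⁻¹ * Matrix.fromCols AM BM := by
  -- block computation lemmas for `M *ᵥ v`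
  have htop : ∀ (v : Fin (s + n) → ℝ) (i : Fin s),
      (M *ᵥ v) (Fin.castAdd m i) =
        (AM *ᵥ (v ∘ Fin.castAdd n)) i + (BM *ᵥ (v ∘ Fin.natAdd s)) i := by
    intro v i
    simp [Matrix.mulVec, dotProduct, Fin.sum_univ_add, hAMdef, hBMdef]
  have hbot : ∀ (v : Fin (s + n) → ℝ) (i : Fin m),
      (M *ᵥ v) (Fin.natAdd s i) =
        (FM *ᵥ (v ∘ Fin.castAdd n)) i + (CM *ᵥ (v ∘ Fin.natAdd s)) i := by
    intro v i
    simp [Matrix.mulVec, dotProduct, Fin.sum_univ_add, hFMdef, hCMdef]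
  -- `AM *ᵥ ·` is injective
  have hAMinj : ∀ x : Fin s → ℝ, AM *ᵥ x = 0 → x = 0 := by
    intro x hx
    have : AM⁻¹ *ᵥ (AM *ᵥ x) = 0 := by rw [hx, Matrix.mulVec_zero]
    rwa [Matrix.mulVec_mulVec, Matrix.nonsing_inv_mul _ hAM, Matrix.one_mulVec] at this
  -- the extension-by-zero linear map
  let J : (Fin s → ℝ) →ₗ[ℝ] (Fin (s + n) → ℝ) :=
    { toFun := fun x => Fin.append x 0
      map_add' := by
        intro x y
        funext j
        refine Fin.addCases (fun i => ?_) (fun i => ?_) j <;>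
          simp [Fin.append_left, Fin.append_right]
      map_smul' := by
        intro c x
        funext j
        refine Fin.addCases (fun i => ?_) (fun i => ?_) j <;>
          simp [Fin.append_left, Fin.append_right] }
  have hJcast : ∀ x : Fin s → ℝ, (Fin.append x (0 : Fin n → ℝ)) ∘ Fin.castAdd n = x := by
    intro x; funext i; simp [Fin.append_left]
  have hJnat : ∀ x : Fin s → ℝ, (Fin.append x (0 : Fin n → ℝ)) ∘ Fin.natAdd s = 0 := by
    intro x; funext i; simp [Fin.append_right]
  let φ : (Fin s → ℝ) →ₗ[ℝ] (Fin (s + m) → ℝ) := M.mulVecLin ∘ₗ J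
  have hφ : ∀ x : Fin s → ℝ, φ x = M *ᵥ (Fin.append x 0) := fun x => rfl
  have hφinj : Function.Injective φ := by
    rw [injective_iff_map_eq_zero]
    intro x hx
    apply hAMinj
    funext i
    have := congrFun hx (Fin.castAdd m i)
    rw [hφ, htop, hJcast, hJnat] at this
    simpa using this
  -- dimension counting: range φ = range M.mulVecLin
  have hle : LinearMap.range φ ≤ LinearMap.range M.mulVecLin := by
    rintro _ ⟨x, rfl⟩; exact ⟨J x, rfl⟩
  have hfr : Module.finrank ℝ (LinearMap.range φ) = s := by
    rw [LinearMap.finrank_range_of_inj hφinj]; simp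
  have hreq : LinearMap.range φ = LinearMap.range M.mulVecLin := by
    apply Submodule.eq_of_le_of_finrank_le hle
    rw [hfr]
    exact hrank
  -- the key pointwise identity
  have key : ∀ y : Fin n → ℝ, CM *ᵥ y = (FM * AM⁻¹ * BM) *ᵥ y := by
    intro y
    set x : Fin s → ℝ := -(AM⁻¹ *ᵥ (BM *ᵥ y)) with hxdef
    set v : Fin (s + n) → ℝ := Fin.append x y with hvdef
    have hvc : v ∘ Fin.castAdd n = x := by funext i; simp [hvdef, Fin.append_left]
    have hvn : v ∘ Fin.natAdd s = y := by funext i; simp [hvdef, Fin.append_right]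
    have hAx : AM *ᵥ x = -(BM *ᵥ y) := by
      rw [hxdef, Matrix.mulVec_neg, Matrix.mulVec_mulVec,
        Matrix.mul_nonsing_inv _ hAM, Matrix.one_mulVec]
    have hmem : M *ᵥ v ∈ LinearMap.range φ := by
      rw [hreq]; exact ⟨v, rfl⟩
    obtain ⟨x', hx'⟩ := hmem
    have hx'0 : x' = 0 := by
      apply hAMinj
      funext i
      have := congrFun hx' (Fin.castAdd m i)
      rw [hφ, htop, htop, hJcast, hJnat, hvc, hvn, hAx] at this
      simpa using this
    have hMv0 : M *ᵥ v = 0 := by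
      rw [← hx', hx'0, map_zero]
    have hb : ∀ i : Fin m, (FM *ᵥ x) i + (CM *ᵥ y) i = 0 := by
      intro i
      have := congrFun hMv0 (Fin.natAdd s i)
      rw [hbot, hvc, hvn] at this
      exact this
    funext i
    have := hb i
    have hFx : (FM *ᵥ x) i = -(((FM * AM⁻¹ * BM) *ᵥ y) i) := by
      rw [hxdef, Matrix.mulVec_neg, Matrix.mulVec_mulVec, Matrix.mulVec_mulVec,
        Matrix.mul_assoc]
      simp
    rw [hFx] at this
    linarith
  have h1 : CM = FM * AM⁻¹ * BM := by
    ext i j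
    have := congrFun (key (Pi.single j 1)) i
    simpa [Matrix.mulVec_single] using this
  refine ⟨h1, ?_⟩
  have h2 : M.submatrix finSumFinEquiv finSumFinEquiv = fromBlocks AM BM FM CM := by
    ext i j
    cases i <;> cases j <;>
      simp [Matrix.fromBlocks, hAMdef, hBMdef, hFMdef, hCMdef]
  rw [h2, Matrix.fromRows_mul, Matrix.mul_fromCols, Matrix.fromRows_mul,
    Matrix.fromRows_mul, Matrix.fromCols_fromRows_eq_fromBlocks,
    Matrix.mul_nonsing_inv _ hAM, Matrix.one_mul, Matrix.one_mul, Matrix.mul_assoc,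
    Matrix.nonsing_inv_mul _ hAM, Matrix.mul_one, ← h1]
end

section
/- Let M ∈ ℝ^{m×n} be partitioned in blocks A_M, B_M, F_M, C_M with A_M ∈ ℝ^{s×s} its top-left block, and suppose A_M = U·Λ·Hᵀ where U, H ∈ ℝ^{s×s} are orthogonal and Λ ∈ ℝ^{s×s} is diagonal and invertible. Define the extended singular vector matrices Û = [U; F_M·H·Λ^{-1}] ∈ ℝ^{m×s} and Ĥ = [H; B_Mᵀ·U·Λ^{-1}] ∈ ℝ^{n×s}. Then Û·Λ·Ĥᵀ = [[A_M, B_M], [F_M, F_M·A_M^{-1}·B_M]]; in particular the Nyström form leaves the blocks A_M, B_M, F_M unchanged and approximates C_M by F_M·A_M^{-1}·B_M. -/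
open Matrix

/-- Nyström-like SVD extension, Eq. (13): if
`A_M = U Λ Hᵀ` is an SVD of the sample block with `Λ` diagonal invertible, then
the extended singular vector matrices `Û = [U; F_M H Λ⁻¹]` and
`Ĥ = [H; B_Mᵀ U Λ⁻¹]` satisfy
`Û Λ Ĥᵀ = [[A_M, B_M], [F_M, F_M A_M⁻¹ B_M]]`. -/
theorem stmt15 (m n s : ℕ)
    (AM : Matrix (Fin s) (Fin s) ℝ)
    (BM : Matrix (Fin s) (Fin n) ℝ)
    (FM : Matrix (Fin m) (Fin s) ℝ)
    (U H : Matrix (Fin s) (Fin s) ℝ)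
    (hU : Uᵀ * U = 1) (hU' : U * Uᵀ = 1)
    (hH : Hᵀ * H = 1) (hH' : H * Hᵀ = 1)
    (l : Fin s → ℝ) (hl : ∀ i, l i ≠ 0)
    (hSVD : AM = U * Matrix.diagonal l * Hᵀ)
    (Uhat : Matrix (Fin s ⊕ Fin m) (Fin s) ℝ)
    (hUhat : Uhat = Matrix.fromRows U (FM * H * (Matrix.diagonal l)⁻¹))
    (Hhat : Matrix (Fin s ⊕ Fin n) (Fin s) ℝ)
    (hHhat : Hhat = Matrix.fromRows H (BMᵀ * U * (Matrix.diagonal l)⁻¹)) :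
    Uhat * Matrix.diagonal l * Hhatᵀ =
      Matrix.fromBlocks AM BM FM (FM * AM⁻¹ * BM) := by
  have hD : IsUnit (Matrix.diagonal l).det := by
    simp only [Matrix.det_diagonal]
    exact isUnit_iff_ne_zero.mpr (Finset.prod_ne_zero_iff.mpr fun i _ => hl i)
  have hDl : (Matrix.diagonal l)⁻¹ * Matrix.diagonal l = 1 :=
    Matrix.nonsing_inv_mul _ hD
  have hDr : Matrix.diagonal l * (Matrix.diagonal l)⁻¹ = 1 :=
    Matrix.mul_nonsing_inv _ hD
  have hDsymm : (Matrix.diagonal l)ᵀ = Matrix.diagonal l := Matrix.diagonal_transpose l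
  have hDisymm : ((Matrix.diagonal l)⁻¹)ᵀ = (Matrix.diagonal l)⁻¹ := by
    rw [Matrix.transpose_nonsing_inv, hDsymm]
  have hAinv : AM⁻¹ = H * (Matrix.diagonal l)⁻¹ * Uᵀ := by
    rw [hSVD]
    apply Matrix.inv_eq_right_inv
    calc U * Matrix.diagonal l * Hᵀ * (H * (Matrix.diagonal l)⁻¹ * Uᵀ)
        = U * Matrix.diagonal l * (Hᵀ * H) * (Matrix.diagonal l)⁻¹ * Uᵀ := by
          simp only [Matrix.mul_assoc]
      _ = 1 := by rw [hH, Matrix.mul_one, Matrix.mul_assoc U, hDr,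
            Matrix.mul_one, hU']
  have e12 : U * Matrix.diagonal l * (BMᵀ * U * (Matrix.diagonal l)⁻¹)ᵀ = BM := by
    rw [Matrix.transpose_mul, Matrix.transpose_mul, hDisymm, Matrix.transpose_transpose]
    calc U * Matrix.diagonal l * ((Matrix.diagonal l)⁻¹ * (Uᵀ * BM))
        = U * (Matrix.diagonal l * (Matrix.diagonal l)⁻¹) * Uᵀ * BM := by simp only [Matrix.mul_assoc]
      _ = BM := by rw [hDr, Matrix.mul_one, hU', Matrix.one_mul]
  have e21 : FM * H * (Matrix.diagonal l)⁻¹ * Matrix.diagonal l * Hᵀ = FM := by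
    rw [Matrix.mul_assoc (FM * H), hDl, Matrix.mul_one, Matrix.mul_assoc FM, hH',
      Matrix.mul_one]
  have e22 : FM * H * (Matrix.diagonal l)⁻¹ * Matrix.diagonal l *
      (BMᵀ * U * (Matrix.diagonal l)⁻¹)ᵀ = FM * AM⁻¹ * BM := by
    rw [Matrix.transpose_mul, Matrix.transpose_mul, hDisymm, Matrix.transpose_transpose,
      hAinv]
    calc FM * H * (Matrix.diagonal l)⁻¹ * Matrix.diagonal l *
          ((Matrix.diagonal l)⁻¹ * (Uᵀ * BM))
        = FM * H * ((Matrix.diagonal l)⁻¹ * Matrix.diagonal l) * (Matrix.diagonal l)⁻¹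
          * Uᵀ * BM := by simp only [Matrix.mul_assoc]
      _ = FM * (H * (Matrix.diagonal l)⁻¹ * Uᵀ) * BM := by
          rw [hDl, Matrix.mul_one]; simp only [Matrix.mul_assoc]
  rw [hUhat, hHhat, Matrix.transpose_fromRows, Matrix.fromRows_mul,
    Matrix.fromRows_mul_fromCols, e12, e21, e22, ← hSVD]
end

section
/- Let M ∈ ℝ^{n×n} be partitioned in blocks A_M, B_M, F_M, C_M with A_M ∈ ℝ^{s×s} its top-left block, and suppose A_M = U·Λ·U^{-1} where U ∈ ℝ^{s×s} is invertible and Λ ∈ ℝ^{s×s} is diagonal and invertible. Define Û = [U; F_M·U·Λ^{-1}] ∈ ℝ^{n×s} and V̂ = [U^{-1}, Λ^{-1}·U^{-1}·B_M] ∈ ℝ^{s×n}. Then Û·Λ·V̂ = [[A_M, B_M], [F_M, F_M·A_M^{-1}·B_M]] = [A_M; F_M]·A_M^{-1}·[A_M, B_M]. -/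
open Matrix

/-- Nyström EVD extension, Eqs. (6)–(7): if
`A_M = U Λ U⁻¹` is an eigen-decomposition of the sample block with `U`
invertible and `Λ` diagonal invertible, then the extended eigenvector matrices
`Û = [U; F_M U Λ⁻¹]` and `V̂ = [U⁻¹, Λ⁻¹ U⁻¹ B_M]` satisfy
`Û Λ V̂ = [[A_M, B_M], [F_M, F_M A_M⁻¹ B_M]] = [A_M; F_M] A_M⁻¹ [A_M, B_M]`. -/
theorem stmt16 (n s : ℕ)
    (AM : Matrix (Fin s) (Fin s) ℝ)
    (BM : Matrix (Fin s) (Fin n) ℝ)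
    (FM : Matrix (Fin n) (Fin s) ℝ)
    (U : Matrix (Fin s) (Fin s) ℝ) (hU : IsUnit U.det)
    (l : Fin s → ℝ) (hl : ∀ i, l i ≠ 0)
    (hEVD : AM = U * Matrix.diagonal l * U⁻¹)
    (Uhat : Matrix (Fin s ⊕ Fin n) (Fin s) ℝ)
    (hUhat : Uhat = Matrix.fromRows U (FM * U * (Matrix.diagonal l)⁻¹))
    (Vhat : Matrix (Fin s) (Fin s ⊕ Fin n) ℝ)
    (hVhat : Vhat = Matrix.fromCols U⁻¹ ((Matrix.diagonal l)⁻¹ * U⁻¹ * BM)) :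
    Uhat * Matrix.diagonal l * Vhat =
        Matrix.fromBlocks AM BM FM (FM * AM⁻¹ * BM) ∧
      Uhat * Matrix.diagonal l * Vhat =
        Matrix.fromRows AM FM * AM⁻¹ * Matrix.fromCols AM BM := by
  have hΛ : IsUnit (Matrix.diagonal l).det := by
    simp only [Matrix.det_diagonal, isUnit_iff_ne_zero]
    exact Finset.prod_ne_zero_iff.mpr fun i _ => hl i
  have hAM : IsUnit AM.det := by
    rw [hEVD]
    simp only [Matrix.det_mul, isUnit_iff_ne_zero] at *
    have : U⁻¹.det ≠ 0 := by
      simpa [isUnit_iff_ne_zero] using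
        (Matrix.isUnit_nonsing_inv_det U (isUnit_iff_ne_zero.mpr hU))
    exact mul_ne_zero (mul_ne_zero hU hΛ) this
  have hAMinv : AM⁻¹ = U * (Matrix.diagonal l)⁻¹ * U⁻¹ := by
    rw [hEVD, Matrix.mul_inv_rev, Matrix.mul_inv_rev, Matrix.nonsing_inv_nonsing_inv _ hU,
      mul_assoc]
  have h12 : U * Matrix.diagonal l * ((Matrix.diagonal l)⁻¹ * U⁻¹ * BM) = BM := by
    rw [← Matrix.mul_assoc, ← Matrix.mul_assoc,
      Matrix.mul_assoc U (Matrix.diagonal l) (Matrix.diagonal l)⁻¹,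
      Matrix.mul_nonsing_inv _ hΛ, Matrix.mul_one, Matrix.mul_nonsing_inv _ hU, Matrix.one_mul]
  have h21 : FM * U * (Matrix.diagonal l)⁻¹ * Matrix.diagonal l * U⁻¹ = FM := by
    rw [Matrix.mul_assoc (FM * U), Matrix.nonsing_inv_mul _ hΛ, Matrix.mul_one,
      Matrix.mul_assoc FM, Matrix.mul_nonsing_inv _ hU, Matrix.mul_one]
  have h22 : FM * U * (Matrix.diagonal l)⁻¹ * Matrix.diagonal l *
      ((Matrix.diagonal l)⁻¹ * U⁻¹ * BM) = FM * AM⁻¹ * BM := by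
    rw [hAMinv, Matrix.mul_assoc (FM * U), Matrix.nonsing_inv_mul _ hΛ, Matrix.mul_one]
    simp only [← Matrix.mul_assoc]
  have key : Uhat * Matrix.diagonal l * Vhat =
      Matrix.fromBlocks AM BM FM (FM * AM⁻¹ * BM) := by
    rw [hUhat, hVhat, Matrix.fromRows_mul, Matrix.fromRows_mul_fromCols, h12, h21, h22,
      ← hEVD]
  refine ⟨key, key.trans ?_⟩
  rw [Matrix.fromRows_mul, Matrix.fromRows_mul_fromCols, Matrix.mul_nonsing_inv _ hAM,
    Matrix.one_mul, Matrix.one_mul, Matrix.mul_assoc FM AM⁻¹ AM,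
    Matrix.nonsing_inv_mul _ hAM, Matrix.mul_one]
end
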